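/- Let p, q, r > 0, a² ≥ 0, and define F(x) = ∑_{j=0}^∞ g_j · I_{px/(r+px)}(p/2 + j, r/2) for x > 0, where g_j are the negative binomial weights with parameters q/(q+a²) and q/2 (and g_0 = 1, g_j = 0 for j ≥ 1 when a² = 0). Then F is nondecreasing on (0,∞) and F(x) → 1 as x → ∞. -/

import Mathlib

open Real MeasureTheory Filter Topology Set intervalIntegral

lemma negBinom_hasSum {c t : ℝ} (hc : 0 < c) (ht0 : 0 < t) (ht1 : t < 1) :
    HasSum (fun j : ℕ => Real.Gamma (c + j) / (j.factorial * Real.Gamma c) * t ^ j)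
      ((1 - t) ^ (-c) : ℝ) := by
  have hΓc : 0 < Real.Gamma c := Real.Gamma_pos_of_pos hc
  set F : ℕ → ℝ → ℝ :=
    fun j x => Real.exp (-x) * x ^ (c + j - 1) * (t ^ j / (j.factorial * Real.Gamma c))
    with hFdef
  have hcj : ∀ j : ℕ, (0:ℝ) < c + j := fun j => by positivity
  have hint : ∀ j : ℕ, ∫ x in Ioi (0:ℝ), F j x
      = Real.Gamma (c + j) / (j.factorial * Real.Gamma c) * t ^ j := by
    intro j
    rw [hFdef]
    rw [MeasureTheory.integral_mul_const]
    rw [show (c + (j:ℝ) - 1) = (c + j) - 1 by ring, ← Real.Gamma_eq_integral (hcj j)]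
    ring
  have hFint : ∀ j : ℕ, IntegrableOn (F j) (Ioi (0:ℝ)) :=
    fun j => (Real.GammaIntegral_convergent (hcj j)).mul_const _
  have hterm_pos : ∀ j : ℕ, 0 < Real.Gamma (c + j) / (j.factorial * Real.Gamma c) * t ^ j := by
    intro j
    have := Real.Gamma_pos_of_pos (hcj j)
    have : (0:ℝ) < j.factorial := by positivity
    positivity
  have hsum : Summable (fun j : ℕ => Real.Gamma (c + j) / (j.factorial * Real.Gamma c) * t ^ j) := by
    apply summable_of_ratio_test_tendsto_lt_one ht1
      (Filter.Eventually.of_forall fun j => (hterm_pos j).ne')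
    have hratio : ∀ j : ℕ,
        ‖Real.Gamma (c + (j+1:ℕ)) / ((j+1:ℕ).factorial * Real.Gamma c) * t ^ (j+1:ℕ)‖ /
          ‖Real.Gamma (c + j) / (j.factorial * Real.Gamma c) * t ^ j‖
        = (c + j) / (j + 1) * t := by
      intro j
      rw [Real.norm_of_nonneg (hterm_pos _).le, Real.norm_of_nonneg (hterm_pos j).le]
      have h1 : Real.Gamma (c + (j+1:ℕ)) = (c + j) * Real.Gamma (c + j) := by
        rw [show (c + ((j:ℕ)+1:ℕ) : ℝ) = (c + j) + 1 by push_cast; ring,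
          Real.Gamma_add_one (hcj j).ne']
      have h2 : ((j+1:ℕ).factorial : ℝ) = (j+1) * j.factorial := by
        rw [Nat.factorial_succ]; push_cast; ring
      have hΓj := Real.Gamma_pos_of_pos (hcj j)
      have hfj : (0:ℝ) < j.factorial := by positivity
      rw [h1, h2]
      field_simp
      ring
    rw [show (fun j : ℕ => ‖_‖ / ‖_‖) = _ from funext hratio]
    have heq : (fun j : ℕ => (c + j) / (j + 1) * t)
        = fun j : ℕ => ((c - 1) * (1 / ((j:ℝ) + 1)) + 1) * t := by
      funext j
      have : ((j:ℝ) + 1) ≠ 0 := by positivity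
      field_simp
      ring
    rw [heq]
    have := ((tendsto_one_div_add_atTop_nhds_zero_nat.const_mul (c - 1)).add_const 1).mul_const t
    simpa using this
  have hnormint : ∀ j : ℕ, (∫ x in Ioi (0:ℝ), ‖F j x‖) = ∫ x in Ioi (0:ℝ), F j x := by
    intro j
    refine setIntegral_congr_fun measurableSet_Ioi fun x hx => ?_
    have hx0 : (0:ℝ) < x := hx
    have hfj : (0:ℝ) < j.factorial := by positivity
    rw [Real.norm_of_nonneg]
    rw [hFdef]
    positivity
  have hS : Summable fun j : ℕ => ∫ x in Ioi (0:ℝ), ‖F j x‖ := by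
    simp only [hnormint]
    simpa only [hint] using hsum
  have key := MeasureTheory.hasSum_integral_of_summable_integral_norm
    (μ := volume.restrict (Ioi 0)) (fun j => hFint j) hS
  have htsum : ∀ x ∈ Ioi (0:ℝ), (∑' j : ℕ, F j x)
      = x ^ (c - 1) * Real.exp (-((1 - t) * x)) * (1 / Real.Gamma c) := by
    intro x hx
    have hx0 : (0:ℝ) < x := hx
    have hFx : ∀ j : ℕ, F j x
        = (Real.exp (-x) * x ^ (c - 1) / Real.Gamma c) * ((t * x) ^ j / j.factorial) := by
      intro j
      have hfj : (0:ℝ) < j.factorial := by positivity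
      rw [hFdef]
      simp only
      rw [show c + (j:ℝ) - 1 = (c - 1) + (j:ℝ) by ring, Real.rpow_add hx0,
        Real.rpow_natCast, mul_pow]
      field_simp
    rw [tsum_congr hFx, tsum_mul_left]
    have hexp : (∑' j : ℕ, (t * x) ^ j / (j.factorial : ℝ)) = Real.exp (t * x) := by
      rw [Real.exp_eq_exp_ℝ]
      exact (NormedSpace.expSeries_div_hasSum_exp (t * x)).tsum_eq
    rw [hexp, show -((1 - t) * x) = t * x + -x by ring, Real.exp_add]
    ring
  have hfinal : (∫ x in Ioi (0:ℝ), (∑' j : ℕ, F j x)) = (1 - t) ^ (-c) := by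
    rw [setIntegral_congr_fun measurableSet_Ioi htsum, MeasureTheory.integral_mul_const,
      Real.integral_rpow_mul_exp_neg_mul_Ioi hc (by linarith : (0:ℝ) < 1 - t),
      one_div, Real.inv_rpow (by linarith : (0:ℝ) ≤ 1 - t), ← Real.rpow_neg (by linarith)]
    field_simp
  rw [funext hint] at key
  rwa [hfinal] at key

lemma betaIntegrand_intervalIntegrable {a b : ℝ} (ha : 0 < a) (hb : 0 < b) :
    IntervalIntegrable (fun s : ℝ => s ^ (a - 1) * (1 - s) ^ (b - 1)) volume 0 1 := by
  have h1 : IntervalIntegrable (fun s : ℝ => s ^ (a - 1) * (1 - s) ^ (b - 1))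
      volume 0 (1/2) := by
    apply IntervalIntegrable.mul_continuousOn (intervalIntegrable_rpow' (by linarith))
    apply ContinuousOn.rpow_const (by fun_prop)
    intro s hs
    rw [uIcc_of_le (by norm_num)] at hs
    left
    have := hs.2
    intro h
    have : s = 1 := by linarith [sub_eq_zero.mp h]
    linarith
  have h2 : IntervalIntegrable (fun s : ℝ => s ^ (a - 1) * (1 - s) ^ (b - 1))
      volume (1/2) 1 := by
    have hbase : IntervalIntegrable (fun x : ℝ => x ^ (b - 1)) volume (1/2) 0 :=
      (intervalIntegrable_rpow' (by linarith)).symm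
    have hcomp := hbase.comp_sub_left 1
    norm_num at hcomp
    apply IntervalIntegrable.continuousOn_mul hcomp
    apply ContinuousOn.rpow_const (by fun_prop)
    intro s hs
    rw [uIcc_of_le (by norm_num)] at hs
    left
    have := hs.1
    intro h
    rw [h] at this
    norm_num at this
  exact h1.trans h2

lemma betaIntegral_one {a b : ℝ} (ha : 0 < a) (hb : 0 < b) :
    (∫ s in (0:ℝ)..1, s ^ (a - 1) * (1 - s) ^ (b - 1))
      = Real.Gamma a * Real.Gamma b / Real.Gamma (a + b) := by
  have key := Complex.Gamma_mul_Gamma_eq_betaIntegral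
    (by simpa using ha : 0 < (Complex.ofReal a).re)
    (by simpa using hb : 0 < (Complex.ofReal b).re)
  have hbeta : Complex.betaIntegral a b
      = ((∫ s in (0:ℝ)..1, s ^ (a - 1) * (1 - s) ^ (b - 1) : ℝ) : ℂ) := by
    rw [Complex.betaIntegral, ← intervalIntegral.integral_ofReal]
    refine intervalIntegral.integral_congr fun s hs => ?_
    rw [uIcc_of_le (by norm_num)] at hs
    push_cast
    rw [Complex.ofReal_cpow hs.1, Complex.ofReal_cpow (by linarith [hs.2])]
    push_cast
    ring_nf
  rw [hbeta, ← Complex.ofReal_add, Complex.Gamma_ofReal, Complex.Gamma_ofReal,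
    Complex.Gamma_ofReal, ← Complex.ofReal_mul, ← Complex.ofReal_mul] at key
  have := Complex.ofReal_inj.mp key
  have hG : 0 < Real.Gamma (a + b) := Real.Gamma_pos_of_pos (by linarith)
  field_simp [this]
  rw [this]; ring

/-- Regularized incomplete beta function. -/
noncomputable def regIncBeta (z a b : ℝ) : ℝ :=
  (Real.Gamma (a + b) / (Real.Gamma a * Real.Gamma b)) *
    ∫ t in (0:ℝ)..z, t ^ (a - 1) * (1 - t) ^ (b - 1)

lemma betaIntegrand_nonneg {a b s : ℝ} (h0 : 0 ≤ s) (h1 : s ≤ 1) :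
    0 ≤ s ^ (a - 1) * (1 - s) ^ (b - 1) :=
  mul_nonneg (Real.rpow_nonneg h0 _) (Real.rpow_nonneg (by linarith) _)

lemma regIncBeta_nonneg {a b : ℝ} (ha : 0 < a) (hb : 0 < b) {z : ℝ} (hz0 : 0 ≤ z)
    (hz1 : z ≤ 1) : 0 ≤ regIncBeta z a b := by
  have hGa := Real.Gamma_pos_of_pos ha
  have hGb := Real.Gamma_pos_of_pos hb
  have hGab := Real.Gamma_pos_of_pos (show 0 < a + b by linarith)
  refine mul_nonneg (by positivity) ?_
  exact intervalIntegral.integral_nonneg hz0 fun u hu =>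
    betaIntegrand_nonneg hu.1 (hu.2.trans hz1)

lemma regIncBeta_mono {a b : ℝ} (ha : 0 < a) (hb : 0 < b) {z1 z2 : ℝ} (h0 : 0 ≤ z1)
    (h12 : z1 ≤ z2) (h21 : z2 ≤ 1) : regIncBeta z1 a b ≤ regIncBeta z2 a b := by
  have hGa := Real.Gamma_pos_of_pos ha
  have hGb := Real.Gamma_pos_of_pos hb
  have hGab := Real.Gamma_pos_of_pos (show 0 < a + b by linarith)
  refine mul_le_mul_of_nonneg_left ?_ (by positivity)
  refine intervalIntegral.integral_mono_interval le_rfl h0 h12 ?_ ?_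
  · refine (ae_restrict_iff' measurableSet_Ioc).mpr (Filter.Eventually.of_forall ?_)
    intro s hs
    exact betaIntegrand_nonneg hs.1.le (hs.2.trans h21)
  · refine (betaIntegrand_intervalIntegrable ha hb).mono_set ?_
    rw [uIcc_of_le (by linarith), uIcc_of_le (by norm_num)]
    exact Icc_subset_Icc le_rfl h21

lemma regIncBeta_one {a b : ℝ} (ha : 0 < a) (hb : 0 < b) : regIncBeta 1 a b = 1 := by
  have hGa := Real.Gamma_pos_of_pos ha
  have hGb := Real.Gamma_pos_of_pos hb
  have hGab := Real.Gamma_pos_of_pos (show 0 < a + b by linarith)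
  rw [regIncBeta, betaIntegral_one ha hb]
  field_simp

lemma regIncBeta_le_one {a b : ℝ} (ha : 0 < a) (hb : 0 < b) {z : ℝ} (hz0 : 0 ≤ z)
    (hz1 : z ≤ 1) : regIncBeta z a b ≤ 1 := by
  rw [← regIncBeta_one ha hb]
  exact regIncBeta_mono ha hb hz0 hz1 le_rfl

lemma regIncBeta_continuousOn {a b : ℝ} (ha : 0 < a) (hb : 0 < b) :
    ContinuousOn (fun z => regIncBeta z a b) (Set.Icc 0 1) := by
  apply continuousOn_const.mul
  have h : IntegrableOn (fun s : ℝ => s ^ (a - 1) * (1 - s) ^ (b - 1))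
      (Set.uIcc (0:ℝ) 1) volume := by
    rw [uIcc_of_le (by norm_num), integrableOn_Icc_iff_integrableOn_Ioc]
    have := (betaIntegrand_intervalIntegrable ha hb)
    rwa [intervalIntegrable_iff, uIoc_of_le (by norm_num)] at this
  have := intervalIntegral.continuousOn_primitive_interval (μ := volume) h
  rwa [uIcc_of_le (by norm_num : (0:ℝ) ≤ 1)] at this

theorem ksquare_cdf_monotone_tendsto_one (p q r a2 : ℝ)
    (hp : 0 < p) (hq : 0 < q) (hr : 0 < r) (ha : 0 ≤ a2)
    (g : ℕ → ℝ)
    (hg : ∀ j : ℕ, g j =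
      (if a2 = 0 then (if j = 0 then (1:ℝ) else 0) else
        (Real.Gamma (q / 2 + j) / (Real.Gamma (j + 1) * Real.Gamma (q / 2))) *
          (q / (q + a2)) ^ (q / 2) * (a2 / (q + a2)) ^ (j : ℕ)))
    (F : ℝ → ℝ)
    (hF : ∀ x : ℝ, 0 < x →
      F x = ∑' j : ℕ, g j * regIncBeta (p * x / (r + p * x)) (p / 2 + j) (r / 2)) :
    MonotoneOn F (Set.Ioi 0) ∧ Filter.Tendsto F Filter.atTop (nhds 1) := by
  have hb : (0:ℝ) < r / 2 := by linarith
  have haj : ∀ j : ℕ, (0:ℝ) < p / 2 + j := fun j => by positivity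
  set z : ℝ → ℝ := fun x => p * x / (r + p * x) with hzdef
  have hz0 : ∀ x : ℝ, 0 < x → 0 ≤ z x := fun x hx => by
    have : 0 < r + p * x := by nlinarith
    positivity
  have hz1 : ∀ x : ℝ, 0 < x → z x ≤ 1 := fun x hx => by
    have h1 : 0 < r + p * x := by nlinarith
    rw [hzdef]
    exact (div_le_one h1).mpr (by nlinarith)
  -- nonnegativity of g
  have hg0 : ∀ j : ℕ, 0 ≤ g j := by
    intro j
    rw [hg j]
    split_ifs with h1 h2
    · norm_num
    · norm_num
    · have ha2 : 0 < a2 := lt_of_le_of_ne ha (Ne.symm h1)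
      have hqa : 0 < q + a2 := by linarith
      have h3 := Real.Gamma_pos_of_pos (show 0 < q / 2 + j by positivity)
      have h4 := Real.Gamma_pos_of_pos (show 0 < (j:ℝ) + 1 by positivity)
      have h5 := Real.Gamma_pos_of_pos (show 0 < q / 2 by linarith)
      have h6 : (0:ℝ) ≤ q / (q + a2) := by positivity
      positivity
  -- g sums to 1
  have hgsum : HasSum g 1 := by
    by_cases h2 : a2 = 0
    · have hgeq : g = fun j => if j = 0 then (1:ℝ) else 0 :=
        funext fun j => by rw [hg j, if_pos h2]
      rw [hgeq]
      exact hasSum_ite_eq 0 (1:ℝ)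
    · have ha2 : 0 < a2 := lt_of_le_of_ne ha (Ne.symm h2)
      have hqa : 0 < q + a2 := by linarith
      set t := a2 / (q + a2) with htdef
      have ht0 : 0 < t := by positivity
      have ht1 : t < 1 := (div_lt_one hqa).mpr (by linarith)
      have h1t : 1 - t = q / (q + a2) := by rw [htdef]; field_simp; ring
      have hkey := (negBinom_hasSum (c := q / 2) (by linarith) ht0 ht1).mul_left
        ((1 - t) ^ (q / 2))
      have hval : ((1 - t : ℝ) ^ (q / 2)) * (1 - t) ^ (-(q / 2)) = 1 := by
        rw [← Real.rpow_add (by linarith : (0:ℝ) < 1 - t)]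
        simp
      rw [hval] at hkey
      have hfun : ∀ j : ℕ,
          (1 - t) ^ (q / 2) * (Real.Gamma (q / 2 + j) / (j.factorial * Real.Gamma (q / 2))
            * t ^ j) = g j := by
        intro j
        rw [hg j, if_neg h2, ← h1t, show ((j:ℝ) + 1) = ((j:ℕ) : ℝ) + 1 by push_cast; ring,
          Real.Gamma_nat_eq_factorial]
        ring
      rw [funext hfun] at hkey
      exact hkey
  -- bounds on the summand
  have hRle : ∀ (j : ℕ) (x : ℝ), 0 < x →
      regIncBeta (z x) (p / 2 + j) (r / 2) ≤ 1 := fun j x hx =>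
    regIncBeta_le_one (haj j) hb (hz0 x hx) (hz1 x hx)
  have hR0 : ∀ (j : ℕ) (x : ℝ), 0 < x →
      0 ≤ regIncBeta (z x) (p / 2 + j) (r / 2) := fun j x hx =>
    regIncBeta_nonneg (haj j) hb (hz0 x hx) (hz1 x hx)
  have hsummand : ∀ x : ℝ, 0 < x →
      Summable (fun j : ℕ => g j * regIncBeta (z x) (p / 2 + j) (r / 2)) := by
    intro x hx
    refine Summable.of_nonneg_of_le
      (fun j => mul_nonneg (hg0 j) (hR0 j x hx))
      (fun j => mul_le_of_le_one_right (hg0 j) (hRle j x hx)) hgsum.summable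
  constructor
  · -- monotonicity
    intro x1 hx1 x2 hx2 hle
    have hx1' : (0:ℝ) < x1 := hx1
    have hx2' : (0:ℝ) < x2 := hx2
    rw [hF x1 hx1', hF x2 hx2']
    refine Summable.tsum_le_tsum ?_ (hsummand x1 hx1') (hsummand x2 hx2')
    intro j
    refine mul_le_mul_of_nonneg_left ?_ (hg0 j)
    refine regIncBeta_mono (haj j) hb (hz0 x1 hx1') ?_ (hz1 x2 hx2')
    have h1 : 0 < r + p * x1 := by nlinarith
    have h2 : 0 < r + p * x2 := by nlinarith
    rw [div_le_div_iff₀ h1 h2]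
    nlinarith [mul_le_mul_of_nonneg_left hle (mul_pos hp hr).le]
  · -- limit
    have hztend : Tendsto z atTop (𝓝 1) := by
      have h1 : Tendsto (fun x : ℝ => r + p * x) atTop atTop :=
        tendsto_atTop_add_const_left _ r (tendsto_id.const_mul_atTop hp)
      have h2 : Tendsto (fun x : ℝ => 1 - r * (r + p * x)⁻¹) atTop (𝓝 1) := by
        have := (h1.inv_tendsto_atTop.const_mul r).const_sub 1
        simpa using this
      refine h2.congr' ?_
      filter_upwards [eventually_gt_atTop (0:ℝ)] with x hx
      have h3 : r + p * x ≠ 0 := by nlinarith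
      rw [hzdef]
      field_simp
      ring
    have hztend' : Tendsto z atTop (𝓝[Set.Icc (0:ℝ) 1] 1) := by
      refine tendsto_nhdsWithin_of_tendsto_nhds_of_eventually_within _ hztend ?_
      filter_upwards [eventually_gt_atTop (0:ℝ)] with x hx
      exact ⟨hz0 x hx, hz1 x hx⟩
    have hterm : ∀ j : ℕ,
        Tendsto (fun x : ℝ => g j * regIncBeta (z x) (p / 2 + j) (r / 2)) atTop (𝓝 (g j)) := by
      intro j
      have hcont : ContinuousWithinAt (fun w => regIncBeta w (p / 2 + j) (r / 2))
          (Set.Icc (0:ℝ) 1) 1 :=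
        (regIncBeta_continuousOn (haj j) hb) 1 (by constructor <;> norm_num)
      have := (hcont.tendsto.comp hztend').const_mul (g j)
      rw [regIncBeta_one (haj j) hb] at this
      simpa using this
    have hkey : Tendsto (fun x : ℝ => ∑' j : ℕ,
        g j * regIncBeta (z x) (p / 2 + j) (r / 2)) atTop (𝓝 (∑' j : ℕ, g j)) := by
      refine tendsto_tsum_of_dominated_convergence hgsum.summable hterm ?_
      filter_upwards [eventually_gt_atTop (0:ℝ)] with x hx
      intro j
      rw [Real.norm_of_nonneg (mul_nonneg (hg0 j) (hR0 j x hx))]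
      exact mul_le_of_le_one_right (hg0 j) (hRle j x hx)
    rw [hgsum.tsum_eq] at hkey
    refine hkey.congr' ?_
    filter_upwards [eventually_gt_atTop (0:ℝ)] with x hx
    exact (hF x hx).symm
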